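/- Let X be a metric space with its Borel σ-algebra and γ a finite Borel measure on X with γ(X) > 0. Let T be a finite binary tree whose nodes j are labeled with Borel sets A_j ⊆ X such that the root node 0 satisfies A_0 = X and every internal node j with children ℓ_j and r_j satisfies A_j = A_{ℓ_j} ∪ A_{r_j} with A_{ℓ_j} ∩ A_{r_j} = ∅. For each node j and each n ∈ ℕ let γ̃^n_j be a finite Borel measure on X (the local estimate) and c^n_j ∈ [0,1], with c^n_j = 0 whenever j is a leaf, and define recursively γ̂^n_j := γ̃^n_j for leaves and γ̂^n_j := (1 − c^n_j)·γ̃^n_j + c^n_j·(γ̂^n_{ℓ_j} + γ̂^n_{r_j}) for internal nodes. Suppose: for every leaf j, γ̃^n_j converges weakly to γ|_{A_j} as n → ∞; and for every internal node j, c^n_j → 1 and sup_n γ̃^n_j(X) < ∞. Then for every node j of the tree, γ̂^n_j converges weakly to γ|_{A_j}; in particular the root estimate γ̂^n_0 converges weakly to γ, and the self-normalized root measures (γ̂^n_0(X))⁻¹ · γ̂^n_0 converge weakly to (γ(X))⁻¹ · γ. -/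

import Mathlib

open MeasureTheory Filter Topology
open scoped NNReal ENNReal BoundedContinuousFunction

/-- Weak convergence of a sequence of (finite Borel) measures: convergence of integrals of
all bounded continuous real-valued functions. -/
def WeakConv {X : Type*} [MeasurableSpace X] [TopologicalSpace X]
    (μ : ℕ → Measure X) (ν : Measure X) : Prop :=
  ∀ f : X →ᵇ ℝ,
    Tendsto (fun n => ∫ x, f x ∂(μ n)) atTop (𝓝 (∫ x, f x ∂ν))

/-- A finite binary inference tree: each node is labeled with a region `A ⊆ X`, a sequence of
local estimates (finite measures) and, for internal nodes, a sequence of child preference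
factors `c n ∈ [0,1]` (leaves have `c = 0`, i.e. no child preference factor). -/
inductive ITree (X : Type*) [MeasurableSpace X] where
  | leaf (A : Set X) (est : ℕ → MeasureTheory.Measure X) : ITree X
  | node (A : Set X) (est : ℕ → MeasureTheory.Measure X) (c : ℕ → ℝ≥0)
      (l r : ITree X) : ITree X

namespace ITree

variable {X : Type*} [MeasurableSpace X] [TopologicalSpace X]

/-- The region associated with a node. -/
def region : ITree X → Set X
  | leaf A _ => A
  | node A _ _ _ _ => A

/-- The combined inference-tree estimator `γ̂^n` at a node: for a leaf it is just the local
estimate; for an internal node it combines the local estimate with the sum of the children's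
combined estimates using the child preference factor. -/
noncomputable def estimate : ITree X → ℕ → MeasureTheory.Measure X
  | leaf _ est, n => est n
  | node _ est c l r, n => (1 - c n) • est n + c n • (l.estimate n + r.estimate n)

/-- Well-formedness and convergence hypotheses: regions are measurable, a parent's region is
the disjoint union of its children's regions, every leaf's local estimate converges weakly to
`γ` restricted to its region, and at every internal node the local estimates are finite
measures of uniformly bounded mass and `c n ∈ [0,1]` with `c n → 1`. -/
def Valid (γ : MeasureTheory.Measure X) : ITree X → Prop
  | leaf A est => MeasurableSet A ∧ (∀ n, IsFiniteMeasure (est n)) ∧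
      WeakConv est (γ.restrict A)
  | node A est c l r => MeasurableSet A ∧
      l.region ∪ r.region = A ∧ Disjoint l.region r.region ∧
      (∀ n, IsFiniteMeasure (est n)) ∧
      (∃ C : ℝ≥0, ∀ n, est n Set.univ ≤ (C : ℝ≥0∞)) ∧
      (∀ n, c n ≤ 1) ∧ Tendsto c atTop (𝓝 1) ∧
      Valid γ l ∧ Valid γ r

/-- `s.IsSubtree t` holds when `s` is (the subtree rooted at) a node of `t`. -/
inductive IsSubtree : ITree X → ITree X → Prop
  | refl (t : ITree X) : IsSubtree t t
  | left {s l r : ITree X} (A : Set X) (est : ℕ → MeasureTheory.Measure X) (c : ℕ → ℝ≥0) :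
      IsSubtree s l → IsSubtree s (node A est c l r)
  | right {s l r : ITree X} (A : Set X) (est : ℕ → MeasureTheory.Measure X) (c : ℕ → ℝ≥0) :
      IsSubtree s r → IsSubtree s (node A est c l r)

end ITree

namespace ITree

variable {X : Type*} [MeasurableSpace X] [TopologicalSpace X]

lemma Valid.region_measurable {γ : Measure X} : ∀ {t : ITree X}, t.Valid γ →
    MeasurableSet t.region
  | leaf _ _, h => h.1
  | node _ _ _ _ _, h => h.1

lemma Valid.estimate_finite {γ : Measure X} :
    ∀ {t : ITree X}, t.Valid γ → ∀ n, IsFiniteMeasure (t.estimate n)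
  | leaf _ _, h, n => h.2.1 n
  | node A est c l r, h, n => by
      obtain ⟨-, -, -, hfin, -, -, -, hl, hr⟩ := h
      haveI := hfin n
      haveI := hl.estimate_finite n
      haveI := hr.estimate_finite n
      show IsFiniteMeasure ((1 - c n) • est n + c n • (l.estimate n + r.estimate n))
      infer_instance

lemma Valid.subtree {γ : Measure X} {s t : ITree X} (h : s.IsSubtree t) :
    t.Valid γ → s.Valid γ := by
  induction h with
  | refl => exact fun h => h
  | left A est c _ ih => exact fun hv => ih hv.2.2.2.2.2.2.2.1
  | right A est c _ ih => exact fun hv => ih hv.2.2.2.2.2.2.2.2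

end ITree

section Main

variable {X : Type*} [MetricSpace X] [MeasurableSpace X] [BorelSpace X]

lemma weakConv_estimate (γ : Measure X) [IsFiniteMeasure γ] :
    ∀ t : ITree X, t.Valid γ → WeakConv t.estimate (γ.restrict t.region) := by
  intro t
  induction t with
  | leaf A est => exact fun h => h.2.2
  | node A est c l r ihl ihr =>
    rintro ⟨hA, hunion, hdisj, hfin, ⟨C, hC⟩, hc1, hctend, hl, hr⟩
    intro f
    haveI := fun n => hfin n
    haveI := fun n => hl.estimate_finite n
    haveI := fun n => hr.estimate_finite n
    have hkey : ∀ n, (∫ x, f x ∂((ITree.node A est c l r).estimate n))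
        = (1 - (c n : ℝ)) * (∫ x, f x ∂(est n))
          + (c n : ℝ) * ((∫ x, f x ∂(l.estimate n)) + (∫ x, f x ∂(r.estimate n))) := by
      intro n
      show (∫ x, f x ∂((1 - c n) • est n + c n • (l.estimate n + r.estimate n))) = _
      haveI : IsFiniteMeasure ((1 - c n) • est n) := by infer_instance
      haveI : IsFiniteMeasure (l.estimate n + r.estimate n) := by infer_instance
      haveI : IsFiniteMeasure (c n • (l.estimate n + r.estimate n)) := by infer_instance
      rw [integral_add_measure (f.integrable _) (f.integrable _),
        integral_smul_nnreal_measure, integral_smul_nnreal_measure,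
        integral_add_measure (f.integrable _) (f.integrable _)]
      have h3 : ((1 - c n : ℝ≥0) : ℝ) = 1 - (c n : ℝ) := by
        rw [NNReal.coe_sub (hc1 n), NNReal.coe_one]
      simp [NNReal.smul_def, h3, mul_add]
    have hc : Tendsto (fun n => (c n : ℝ)) atTop (𝓝 1) := by
      simpa using NNReal.tendsto_coe.mpr hctend
    have h1 : Tendsto (fun n => (1 - (c n : ℝ)) * (∫ x, f x ∂(est n))) atTop (𝓝 0) := by
      have hb : Tendsto (fun n => |1 - (c n : ℝ)| * ((C : ℝ) * ‖f‖)) atTop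
          (𝓝 (|1 - (1:ℝ)| * ((C : ℝ) * ‖f‖))) :=
        ((tendsto_const_nhds.sub hc).abs).mul tendsto_const_nhds
      simp only [sub_self, abs_zero, zero_mul] at hb
      refine squeeze_zero_norm (fun n => ?_) hb
      rw [norm_mul, Real.norm_eq_abs]
      apply mul_le_mul_of_nonneg_left _ (abs_nonneg _)
      calc ‖∫ x, f x ∂(est n)‖ ≤ ENNReal.toReal (est n Set.univ) * ‖f‖ :=
            f.norm_integral_le_mul_norm (est n)
        _ ≤ (C : ℝ) * ‖f‖ := by
            apply mul_le_mul_of_nonneg_right _ (norm_nonneg f)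
            have := hC n
            have h2 : ENNReal.toReal (est n Set.univ) ≤ ENNReal.toReal (C : ℝ≥0∞) :=
              ENNReal.toReal_mono (by simp) this
            simpa using h2
    have h2 : Tendsto (fun n => (c n : ℝ) *
        ((∫ x, f x ∂(l.estimate n)) + (∫ x, f x ∂(r.estimate n)))) atTop
        (𝓝 (1 * ((∫ x, f x ∂(γ.restrict l.region)) + (∫ x, f x ∂(γ.restrict r.region))))) :=
      hc.mul ((ihl hl f).add (ihr hr f))
    have htarget : (∫ x, f x ∂(γ.restrict (ITree.node A est c l r).region))
        = (∫ x, f x ∂(γ.restrict l.region)) + (∫ x, f x ∂(γ.restrict r.region)) := by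
      show (∫ x, f x ∂(γ.restrict A)) = _
      rw [← hunion, Measure.restrict_union hdisj hr.region_measurable,
        integral_add_measure (f.integrable _) (f.integrable _)]
    rw [htarget]
    have := h1.add h2
    rw [zero_add, one_mul] at this
    exact this.congr (fun n => (hkey n).symm)

end Main

theorem inference_tree_consistency
    {X : Type*} [MetricSpace X] [MeasurableSpace X] [BorelSpace X]
    (γ : Measure X) [IsFiniteMeasure γ] (hγpos : 0 < γ Set.univ)
    (t : ITree X) (hvalid : t.Valid γ) (hroot : t.region = Set.univ) :
    (∀ s : ITree X, s.IsSubtree t → WeakConv s.estimate (γ.restrict s.region)) ∧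
    WeakConv t.estimate γ ∧
    WeakConv (fun n => (t.estimate n Set.univ)⁻¹ • t.estimate n) ((γ Set.univ)⁻¹ • γ) := by
  have hsub : ∀ s : ITree X, s.IsSubtree t → WeakConv s.estimate (γ.restrict s.region) :=
    fun s hs => weakConv_estimate γ s (ITree.Valid.subtree hs hvalid)
  have hmain : WeakConv t.estimate γ := by
    have := weakConv_estimate γ t hvalid
    rwa [hroot, Measure.restrict_univ] at this
  refine ⟨hsub, hmain, ?_⟩
  haveI := fun n => hvalid.estimate_finite n
  -- mass convergence
  have hmass : Tendsto (fun n => (t.estimate n Set.univ).toReal) atTop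
      (𝓝 ((γ Set.univ).toReal)) := by
    have h1 := hmain (1 : X →ᵇ ℝ)
    simpa [integral_const, measureReal_def] using h1
  have hγR : (0:ℝ) < (γ Set.univ).toReal :=
    ENNReal.toReal_pos hγpos.ne' (measure_ne_top γ _)
  intro f
  have hrw : ∀ n, (∫ x, f x ∂((t.estimate n Set.univ)⁻¹ • t.estimate n))
      = ((t.estimate n Set.univ).toReal)⁻¹ * (∫ x, f x ∂(t.estimate n)) := by
    intro n
    rw [integral_smul_measure, ENNReal.toReal_inv, smul_eq_mul]
  have hrw2 : (∫ x, f x ∂((γ Set.univ)⁻¹ • γ))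
      = ((γ Set.univ).toReal)⁻¹ * (∫ x, f x ∂γ) := by
    rw [integral_smul_measure, ENNReal.toReal_inv, smul_eq_mul]
  rw [hrw2]
  exact ((hmass.inv₀ hγR.ne').mul (hmain f)).congr (fun n => (hrw n).symm)
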